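/- Let T be the transition system with action set A = {in(n), out(n) | n ∈ ℕ}, states {⊥} ∪ {q_n | n ∈ ℕ} ∪ {∗}, initial state ⊥, and transitions ⊥ →in(n) q_n and q_n →out(n) ∗ for every n ∈ ℕ (this is the transition system of the π-term x(y).ȳ.0, where in(n) is input of name n on channel x and out(n) is output on channel n). Then there is no generalized reactive Turing machine M with a finite set of control states and a finite tape alphabet (but possibly infinitely many actions and infinitely many transition rules) such that T(M) ≈b T. -/

import Mathlib

set_option autoImplicit false

universe u v w x

/-! ### Labelled transition systems.
`A` is the set of observable actions; labels are `Option A`, with `none` playing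
the role of the unobservable action τ. -/

structure LTS (A : Type u) where
  /-- the set of states -/
  S : Type v
  /-- the labelled transition relation; `step s a t` means s →a t (with `a = none` for τ) -/
  step : S → Option A → S → Prop
  /-- the initial state ↑ -/
  init : S

namespace LTS

variable {A : Type u}

/-- a τ-step -/
def TauStep (T : LTS.{u, v} A) (s t : T.S) : Prop := T.step s none t

/-- `→*` : the reflexive-transitive closure of →τ -/
def TauStar (T : LTS.{u, v} A) : T.S → T.S → Prop := Relation.ReflTransGen T.TauStep

/-- `→+` : the transitive closure of →τ -/
def TauPlus (T : LTS.{u, v} A) : T.S → T.S → Prop := Relation.TransGen T.TauStep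

/-- `s →(a) t` : either `s →a t`, or `a = τ` and `s = t` -/
def OptStep (T : LTS.{u, v} A) (s : T.S) (a : Option A) (t : T.S) : Prop :=
  T.step s a t ∨ (a = none ∧ s = t)

/-- reachability from the initial state -/
def Reachable (T : LTS.{u, v} A) (s : T.S) : Prop :=
  Relation.ReflTransGen (fun p q => ∃ a, T.step p a q) T.init s

/-- `T` is boundedly branching: there is `B : ℕ` with `|out(s)| ≤ B` for every state `s`,
where `out(s) = {(a,t) | s →a t}`. -/
def BoundedBranching (T : LTS.{u, v} A) : Prop :=
  ∃ B : ℕ, ∀ s : T.S, Cardinal.mk {p : Option A × T.S // T.step s p.1 p.2} ≤ (B : Cardinal)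

end LTS

/-- `R` is a branching bisimulation from `T1` to `T2`. -/
def IsBranchingBisim {A : Type u} (T1 : LTS.{u, v} A) (T2 : LTS.{u, w} A)
    (R : T1.S → T2.S → Prop) : Prop :=
  ∀ s1 s2, R s1 s2 →
    (∀ a s1', T1.step s1 a s1' →
      ∃ s2'' s2', T2.TauStar s2 s2'' ∧ T2.OptStep s2'' a s2' ∧ R s1 s2'' ∧ R s1' s2') ∧
    (∀ a s2', T2.step s2 a s2' →
      ∃ s1'' s1', T1.TauStar s1 s1'' ∧ T1.OptStep s1'' a s1' ∧ R s1'' s2 ∧ R s1' s2')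

/-- `R` is divergence-preserving. -/
def IsDivPres {A : Type u} (T1 : LTS.{u, v} A) (T2 : LTS.{u, w} A)
    (R : T1.S → T2.S → Prop) : Prop :=
  (∀ (f : ℕ → T1.S) (s2 : T2.S),
      (∀ i, T1.TauStep (f i) (f (i + 1))) → (∀ i, R (f i) s2) →
      ∃ s2', T2.TauPlus s2 s2' ∧ ∃ i, R (f i) s2') ∧
  (∀ (s1 : T1.S) (g : ℕ → T2.S),
      (∀ i, T2.TauStep (g i) (g (i + 1))) → (∀ i, R s1 (g i)) →
      ∃ s1', T1.TauPlus s1 s1' ∧ ∃ i, R s1' (g i))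

/-- `T1 ≈b T2` -/
def BranchingBisimilar {A : Type u} (T1 : LTS.{u, v} A) (T2 : LTS.{u, w} A) : Prop :=
  ∃ R, IsBranchingBisim T1 T2 R ∧ R T1.init T2.init

/-- `T1 ≈Δ T2` -/
def BranchingBisimilarD {A : Type u} (T1 : LTS.{u, v} A) (T2 : LTS.{u, w} A) : Prop :=
  ∃ R, IsBranchingBisim T1 T2 R ∧ IsDivPres T1 T2 R ∧ R T1.init T2.init

/-- `s1 ≈b s2` for states -/
def SBisim {A : Type u} (T1 : LTS.{u, v} A) (T2 : LTS.{u, w} A) (s1 : T1.S) (s2 : T2.S) : Prop :=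
  ∃ R, IsBranchingBisim T1 T2 R ∧ R s1 s2

/-- `s1 ≈Δ s2` for states -/
def SBisimD {A : Type u} (T1 : LTS.{u, v} A) (T2 : LTS.{u, w} A) (s1 : T1.S) (s2 : T2.S) : Prop :=
  ∃ R, IsBranchingBisim T1 T2 R ∧ IsDivPres T1 T2 R ∧ R s1 s2

/-- `R` is a bisimulation up to ≈b from `T1` to `T2`. -/
def IsBisimUpTo {A : Type u} (T1 : LTS.{u, v} A) (T2 : LTS.{u, w} A)
    (R : T1.S → T2.S → Prop) : Prop :=
  ∀ s1 s2, R s1 s2 →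
    (∀ a s1'' s1', T1.TauStar s1 s1'' → T1.step s1'' a s1' →
        SBisim T1 T1 s1 s1'' → (a ≠ none ∨ ¬ SBisim T1 T1 s1'' s1') →
        ∃ s2', T2.step s2 a s2' ∧
          (∃ u, SBisim T1 T1 s1'' u ∧ R u s2) ∧
          (∃ u, SBisim T1 T1 s1' u ∧ R u s2')) ∧
    (∀ a s2', T2.step s2 a s2' →
        ∃ s1'' s1', T1.TauStar s1 s1'' ∧ T1.step s1'' a s1' ∧ SBisim T1 T1 s1'' s1 ∧
          (∃ u, SBisim T1 T1 s1' u ∧ R u s2'))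

/-- the ≈Δ-equivalence class of a state -/
def eqClassD {A : Type u} (T : LTS.{u, v} A) (s : T.S) : Set T.S := {t | SBisimD T T s t}

/-- the branching degree of a state up to ≈Δ :
the cardinality of `{ (a, [s']_{≈Δ}) | ∃ s''. s →* s'' →a s', s ≈Δ s'', (a = τ ⇒ s'' ≉Δ s') }`. -/
def degD {A : Type u} (T : LTS.{u, v} A) (s : T.S) : Cardinal :=
  Cardinal.mk {p : Option A × Set T.S //
    ∃ s'' s', T.TauStar s s'' ∧ T.step s'' p.1 s' ∧ SBisimD T T s s'' ∧
      (p.1 = none → ¬ SBisimD T T s'' s') ∧ p.2 = eqClassD T s'}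

/-- `T` has a divergence up to ≈Δ : an infinite τ-sequence of reachable,
mutually ≈Δ-equivalent states. -/
def HasDivergenceD {A : Type u} (T : LTS.{u, v} A) : Prop :=
  ∃ f : ℕ → T.S, (∀ i, T.Reachable (f i)) ∧ (∀ i, T.TauStep (f i) (f (i + 1))) ∧
    ∀ i j, SBisimD T T (f i) (f j)

/-- `T` is boundedly branching up to ≈Δ (over the reachable states). -/
def BoundedBranchingUpToD {A : Type u} (T : LTS.{u, v} A) : Prop :=
  ∃ B : ℕ, ∀ s, T.Reachable s → degD T s ≤ (B : Cardinal)

/-! ### (Generalized) reactive Turing machines.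
Tape symbols are `Option D` with `none` the blank `□`; actions are `Option A` with
`none` the unobservable action τ.  A configuration `(s, (l, d, r))` consists of the
control state `s`, the (reversed) tape content `l` to the left of the head, the symbol
`d` under the head, and the tape content `r` to the right of the head; this represents
the tape instance δL ď δR with δL = reverse of l and δR = r.  The boolean in a rule
is the move direction: `false` = L, `true` = R. -/

/-- generalized reactive Turing machines: possibly infinitely many control states,
tape symbols and transition rules. -/
structure GRTM (A : Type u) where
  /-- control states -/
  Q : Type
  /-- data symbols (the tape alphabet is `Option D`, `none` being the blank □) -/
  D : Type
  /-- transition rules `(s, d, a, e, mv, t)`, i.e. s →a[d/e]mv t -/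
  rules : Set (Q × Option D × Option A × Option D × Bool × Q)
  /-- the initial control state -/
  init : Q

namespace GRTM

variable {A : Type u}

/-- configurations -/
abbrev Conf (M : GRTM A) : Type :=
  M.Q × List (Option M.D) × Option M.D × List (Option M.D)

/-- the transition system `T(M)` associated with `M` -/
def lts (M : GRTM A) : LTS.{u, 0} A where
  S := M.Conf
  init := (M.init, [], none, [])
  step := fun c a c' => ∃ e t,
    ((c.1, c.2.2.1, a, e, false, t) ∈ M.rules ∧
      c' = (t, c.2.1.tail, c.2.1.headD none, e :: c.2.2.2)) ∨
    ((c.1, c.2.2.1, a, e, true, t) ∈ M.rules ∧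
      c' = (t, e :: c.2.1, c.2.2.2.headD none, c.2.2.2.tail))

end GRTM

/-- reactive Turing machines: finitely many control states, data symbols and rules. -/
structure RTM (A : Type u) where
  /-- control states -/
  Q : Type
  /-- data symbols -/
  D : Type
  finQ : Finite Q
  finD : Finite D
  /-- transition rules `(s, d, a, e, mv, t)`, i.e. s →a[d/e]mv t -/
  rules : Set (Q × Option D × Option A × Option D × Bool × Q)
  finRules : rules.Finite
  /-- the initial control state -/
  init : Q

namespace RTM

variable {A : Type u}

/-- configurations -/
abbrev Conf (M : RTM A) : Type :=
  M.Q × List (Option M.D) × Option M.D × List (Option M.D)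

/-- the transition system `T(M)` associated with `M` -/
def lts (M : RTM A) : LTS.{u, 0} A where
  S := M.Conf
  init := (M.init, [], none, [])
  step := fun c a c' => ∃ e t,
    ((c.1, c.2.2.1, a, e, false, t) ∈ M.rules ∧
      c' = (t, c.2.1.tail, c.2.1.headD none, e :: c.2.2.2)) ∨
    ((c.1, c.2.2.1, a, e, true, t) ∈ M.rules ∧
      c' = (t, e :: c.2.1, c.2.2.2.headD none, c.2.2.2.tail))

end RTM

/-! ### STATEMENT 14: the behaviour of the π-term x(y).ȳ.0 cannot be simulated, up to
branching bisimilarity, by a generalized RTM with finitely many control states and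
finitely many tape symbols (even if it has infinitely many actions and rules). -/

/-- the actions in(n) and out(n) for n ∈ ℕ -/
inductive L14 : Type
  | inp : ℕ → L14
  | out : ℕ → L14
  deriving DecidableEq

/-- the states ⊥, q_n (n ∈ ℕ) and ∗ -/
inductive S14 : Type
  | bot : S14
  | q : ℕ → S14
  | star : S14
  deriving DecidableEq

/-- the transition system of the π-term x(y).ȳ.0 :
⊥ →in(n) q_n and q_n →out(n) ∗ for every n ∈ ℕ -/
def T14 : LTS.{0, 0} L14 where
  S := S14
  init := S14.bot
  step := fun s a t =>
    (∃ n : ℕ, s = S14.bot ∧ a = some (L14.inp n) ∧ t = S14.q n) ∨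
    (∃ n : ℕ, s = S14.q n ∧ a = some (L14.out n) ∧ t = S14.star)

lemma T14_no_tau {s t : S14} : ¬ T14.step s none t := by
  rintro (⟨n, _, h, _⟩ | ⟨n, _, h, _⟩) <;> exact nomatch h

lemma T14_tauStar {s t : S14} (h : T14.TauStar s t) : s = t := by
  induction h with
  | refl => rfl
  | tail _ h _ => exact absurd h T14_no_tau

theorem no_finite_state_grtm_for_T14 (M : GRTM L14)
    (hQ : Finite M.Q) (hD : Finite M.D) :
    ¬ BranchingBisimilar M.lts T14 := by
  rintro ⟨R, hR, h0⟩
  -- For each n, find a pair (control state, head symbol) of a configuration related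
  -- to q_n that has an out(n)-rule.
  have key : ∀ n : ℕ, ∃ (s : M.Q) (d : Option M.D),
      (∃ c : M.Conf, c.1 = s ∧ c.2.2.1 = d ∧ R c (S14.q n)) ∧
      (∃ e t mv, (s, d, some (L14.out n), e, mv, t) ∈ M.rules) := by
    intro n
    have hbot : T14.step S14.bot (some (L14.inp n)) (S14.q n) := Or.inl ⟨n, rfl, rfl, rfl⟩
    obtain ⟨c'', c', _, hstep, _, hRc'⟩ := (hR _ _ h0).2 _ _ hbot
    have hq : T14.step (S14.q n) (some (L14.out n)) S14.star := Or.inr ⟨n, rfl, rfl, rfl⟩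
    obtain ⟨e'', e', _, hstep', hRe, _⟩ := (hR _ _ hRc').2 _ _ hq
    rcases hstep' with hstep' | ⟨h, _⟩
    · obtain ⟨eSym, t, ⟨hmem, _⟩ | ⟨hmem, _⟩⟩ := hstep'
      · exact ⟨e''.1, e''.2.2.1, ⟨e'', rfl, rfl, hRe⟩, eSym, t, false, hmem⟩
      · exact ⟨e''.1, e''.2.2.1, ⟨e'', rfl, rfl, hRe⟩, eSym, t, true, hmem⟩
    · exact nomatch h
  choose s d hc hrule using key
  -- The map n ↦ (s n, d n) is injective.
  have hinj : Function.Injective (fun n => (s n, d n)) := by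
    intro n m hnm
    simp only [Prod.mk.injEq] at hnm
    obtain ⟨c, hc1, hc2, hcR⟩ := hc n
    obtain ⟨eSym, t, mv, hmem⟩ := hrule m
    rw [← hnm.1, ← hc1, ← hnm.2, ← hc2] at hmem
    -- the out(m)-rule applies at c, which is related to q n
    have hstep : ∃ c', M.lts.step c (some (L14.out m)) c' := by
      cases mv with
      | false => exact ⟨(t, c.2.1.tail, c.2.1.headD none, eSym :: c.2.2.2),
          eSym, t, Or.inl ⟨hmem, rfl⟩⟩
      | true => exact ⟨(t, eSym :: c.2.1, c.2.2.2.headD none, c.2.2.2.tail),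
          eSym, t, Or.inr ⟨hmem, rfl⟩⟩
    obtain ⟨c', hstep⟩ := hstep
    obtain ⟨s2'', s2', hτ, hopt, _, _⟩ := (hR _ _ hcR).1 _ _ hstep
    have hs2 : s2'' = S14.q n := (T14_tauStar hτ).symm
    subst hs2
    rcases hopt with hopt | ⟨h, _⟩
    · rcases hopt with ⟨k, h1, _, _⟩ | ⟨k, h1, h2, _⟩
      · exact S14.noConfusion h1
      · cases S14.q.injEq .. ▸ h1
        cases L14.out.injEq .. ▸ Option.some.injEq .. ▸ h2
        rfl
    · exact nomatch h
  haveI := hQ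
  haveI := hD
  haveI := Fintype.ofFinite M.Q
  haveI := Fintype.ofFinite M.D
  haveI := Finite.of_injective _ hinj
  exact not_finite ℕ
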